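/- Let k be an even integer and t an odd integer with 0 < t < k. Let H = (V,E) be a k-uniform hypergraph with n vertices, m ≥ 1 edges, and minimum degree δ, and let λ be the least element of the set {k·∑_{e∈E} ∏_{i∈e} x_i : x ∈ ℝ^V, ∑_{i∈V} x_i^k = 1}. Suppose there exists a t-independent set S such that every vertex in S has degree δ, and every vertex i ∉ S satisfies |{e ∈ E(i) : e ∩ S ≠ ∅}| = ( (−λ)^{k/(k−t)} + d_i·(−λ)^{t/(k−t)} ) / ( δ^{t/(k−t)} + (−λ)^{t/(k−t)} ). Then α_t(H) = t(km − nλ)·(−λ)^{t/(k−t)} / ( (k−t)·δ^{k/(k−t)} + (kδ − tλ)·(−λ)^{t/(k−t)} ), and |S| = α_t(H). -/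

import Mathlib

theorem rpow_split' {x : ℝ} (hx : 0 < x) {k t : ℕ} (h : (t:ℝ) < k) :
    x ^ ((k:ℝ)/((k:ℝ)-t)) = x * x ^ ((t:ℝ)/((k:ℝ)-t)) := by
  have h0 : (k:ℝ) - t ≠ 0 := by linarith
  have : (k:ℝ)/((k:ℝ)-t) = 1 + (t:ℝ)/((k:ℝ)-t) := by field_simp; ring
  rw [this, Real.rpow_add hx, Real.rpow_one]

theorem dc {V : Type*} [Fintype V] [DecidableEq V] (E : Finset (Finset V)) (T : Finset V) :
    ∑ i ∈ T, (E.filter fun e => i ∈ e).card = ∑ e ∈ E, (e ∩ T).card := by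
  simp only [Finset.card_filter]
  rw [Finset.sum_comm]
  refine Finset.sum_congr rfl fun e _ => ?_
  rw [← Finset.card_filter, Finset.filter_mem_eq_inter, Finset.inter_comm]

theorem tsum_inter {V : Type*} [Fintype V] [DecidableEq V] (E : Finset (Finset V))
    (t : ℕ) (T : Finset V) (hT : ∀ e ∈ E, (e ∩ T).card = 0 ∨ (e ∩ T).card = t) :
    ∑ e ∈ E, (e ∩ T).card = t * (E.filter fun e => (e ∩ T).Nonempty).card := by
  rw [← Finset.sum_filter_add_sum_filter_not E (fun e => (e ∩ T).Nonempty)]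
  have h1 : ∀ e ∈ E.filter (fun e => (e ∩ T).Nonempty), (e ∩ T).card = t := by
    intro e he
    rw [Finset.mem_filter] at he
    refine (hT e he.1).resolve_left fun h0 => ?_
    rw [Finset.card_eq_zero] at h0
    exact he.2.ne_empty h0
  have h2 : ∀ e ∈ E.filter (fun e => ¬(e ∩ T).Nonempty), (e ∩ T).card = 0 := by
    intro e he
    rw [Finset.mem_filter, Finset.not_nonempty_iff_eq_empty] at he
    rw [he.2, Finset.card_empty]
  rw [Finset.sum_congr rfl h1, Finset.sum_congr rfl h2, Finset.sum_const,
    Finset.sum_const, smul_eq_mul, smul_eq_mul, mul_zero, add_zero, mul_comm]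

theorem dc2 {V : Type*} [Fintype V] [DecidableEq V] (E : Finset (Finset V)) (S : Finset V) :
    ∑ i ∈ Sᶜ, (E.filter fun e => i ∈ e ∧ (e ∩ S).Nonempty).card
      = ∑ e ∈ E.filter (fun e => (e ∩ S).Nonempty), (e \ S).card := by
  simp only [Finset.card_filter]
  rw [Finset.sum_comm, Finset.sum_filter]
  refine Finset.sum_congr rfl fun e _ => ?_
  by_cases h : (e ∩ S).Nonempty
  · simp only [h, and_true, if_true, ← Finset.card_filter]
    congr 1
    ext i
    simp [Finset.mem_sdiff, Finset.mem_compl, and_comm]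
  · simp [h]

theorem indep_bound {V : Type*} [Fintype V] [DecidableEq V]
    (k t : ℕ) (hk : Even k) (ht : Odd t) (ht0 : 0 < t) (htk : t < k)
    (E : Finset (Finset V)) (huniform : ∀ e ∈ E, e.card = k) (hm : 1 ≤ E.card)
    (δ : ℕ) (hδ1 : 1 ≤ δ) (hδlb : ∀ i : V, δ ≤ (E.filter fun e => i ∈ e).card)
    (μ : ℝ) (hμ1 : 1 ≤ μ)
    (hlb : ∀ y ∈ {y : ℝ | ∃ x : V → ℝ, ∑ i, x i ^ k = 1 ∧
      y = k * ∑ e ∈ E, ∏ i ∈ e, x i}, -μ ≤ y)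
    (T : Finset V) (hT : ∀ e ∈ E, (e ∩ T).card = 0 ∨ (e ∩ T).card = t) :
    (T.card : ℝ) * (((k:ℝ) - t) * δ * (δ:ℝ) ^ ((t:ℝ)/((k:ℝ)-t))
        + ((k:ℝ)*δ + t*μ) * μ ^ ((t:ℝ)/((k:ℝ)-t)))
      ≤ (t:ℝ) * μ ^ ((t:ℝ)/((k:ℝ)-t)) * ((k:ℝ)*E.card + (Fintype.card V)*μ) := by
  classical
  have hk0 : 0 < k := ht0.trans htk
  have htkR : (t:ℝ) < k := by exact_mod_cast htk
  have hktR : (0:ℝ) < (k:ℝ) - t := by linarith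
  have hμ0 : (0:ℝ) < μ := by linarith
  have hδR : (0:ℝ) < δ := by exact_mod_cast Nat.lt_of_lt_of_le Nat.zero_lt_one hδ1
  set n := Fintype.card V with hn
  set m := E.card with hmdef
  set σ := T.card with hσdef
  set p : ℝ := μ ^ ((t:ℝ)/((k:ℝ)-t)) with hpdef
  set D : ℝ := (δ:ℝ) ^ ((t:ℝ)/((k:ℝ)-t)) with hDdef
  have hp0 : 0 < p := Real.rpow_pos_of_pos hμ0 _
  have hD0 : 0 < D := Real.rpow_pos_of_pos hδR _
  set u : ℝ := ((δ:ℝ)/μ) ^ ((1:ℝ)/((k:ℝ)-t)) with hudef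
  have hdm0 : (0:ℝ) < (δ:ℝ)/μ := div_pos hδR hμ0
  have hu0 : 0 < u := Real.rpow_pos_of_pos hdm0 _
  have hut : u ^ t = D / p := by
    rw [hudef, ← Real.rpow_natCast (((δ:ℝ)/μ) ^ ((1:ℝ)/((k:ℝ)-t))) t,
      ← Real.rpow_mul hdm0.le,
      show (1/((k:ℝ)-t)) * (t:ℕ) = (t:ℝ)/((k:ℝ)-t) by push_cast; ring,
      Real.div_rpow hδR.le hμ0.le]
  have huk : u ^ k = (δ:ℝ) * D / (μ * p) := by
    rw [hudef, ← Real.rpow_natCast (((δ:ℝ)/μ) ^ ((1:ℝ)/((k:ℝ)-t))) k,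
      ← Real.rpow_mul hdm0.le,
      show (1/((k:ℝ)-t)) * (k:ℕ) = (k:ℝ)/((k:ℝ)-t) by push_cast; ring,
      Real.div_rpow hδR.le hμ0.le, rpow_split' hδR htkR, rpow_split' hμ0 htkR]
  have hσn : σ ≤ n := Finset.card_le_univ T
  have hn0 : 0 < n := by
    obtain ⟨e0, he0⟩ := Finset.card_pos.mp hm
    have hcard : e0.card = k := huniform e0 he0
    obtain ⟨v0, _⟩ := Finset.card_pos.mp (hcard ▸ hk0)
    exact Fintype.card_pos_iff.mpr ⟨v0⟩
  set W : ℝ := σ * u^k + ((n:ℝ) - σ) with hWdef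
  have hW0 : 0 < W := by
    rcases Nat.eq_zero_or_pos σ with h | h
    · have h1 : (1:ℝ) ≤ n := by exact_mod_cast hn0
      rw [hWdef, h]
      push_cast
      nlinarith
    · have h1 : (0:ℝ) < σ * u ^ k := by
        have : (0:ℝ) < σ := by exact_mod_cast h
        positivity
      have h2 : (0:ℝ) ≤ (n:ℝ) - σ := by
        have : (σ:ℝ) ≤ n := by exact_mod_cast hσn
        linarith
      rw [hWdef]; linarith
  set c : ℝ := W ^ (-(1:ℝ)/(k:ℝ)) with hcdef
  have hc0 : 0 < c := Real.rpow_pos_of_pos hW0 _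
  have hck : c ^ k = W⁻¹ := by
    rw [hcdef, ← Real.rpow_natCast (W ^ (-(1:ℝ)/(k:ℝ))) k, ← Real.rpow_mul hW0.le,
      show (-(1:ℝ)/(k:ℝ)) * (k:ℕ) = -1 by
        have : (k:ℝ) ≠ 0 := by positivity
        field_simp,
      Real.rpow_neg_one]
  set x : V → ℝ := fun i => if i ∈ T then -(c*u) else c with hxdef
  have hxnorm : ∑ i, x i ^ k = 1 := by
    have h1 : ∑ i, x i ^ k = ∑ i ∈ T, (c*u)^k + ∑ i ∈ Tᶜ, c^k := by
      rw [← Finset.sum_add_sum_compl T (fun i => x i ^ k)]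
      congr 1
      · refine Finset.sum_congr rfl fun i hi => ?_
        simp only [hxdef, if_pos hi]
        exact hk.neg_pow _
      · refine Finset.sum_congr rfl fun i hi => ?_
        simp only [hxdef, if_neg (Finset.mem_compl.mp hi)]
    rw [h1, Finset.sum_const, Finset.sum_const, Finset.card_compl, nsmul_eq_mul,
      nsmul_eq_mul, ← hσdef, ← hn]
    have h2 : (σ:ℝ)*(c*u)^k + ((n - σ : ℕ):ℝ)*c^k = c^k * W := by
      rw [Nat.cast_sub hσn, hWdef]; ring
    rw [h2, hck, inv_mul_cancel₀ hW0.ne']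
  set B := (E.filter fun e => (e ∩ T).Nonempty).card with hBdef
  have hBm : B ≤ m := Finset.card_filter_le _ _
  have hprod : ∀ e ∈ E, ∏ i ∈ e, x i
      = if (e ∩ T).Nonempty then -(c^k * u^t) else c^k := by
    intro e he
    by_cases hne : (e ∩ T).Nonempty
    · rw [if_pos hne]
      have hcardt : (e ∩ T).card = t := by
        refine (hT e he).resolve_left fun h0 => ?_
        rw [Finset.card_eq_zero] at h0
        exact hne.ne_empty h0
      rw [← Finset.prod_filter_mul_prod_filter_not e (· ∈ T) x]
      have hfT : e.filter (· ∈ T) = e ∩ T := Finset.filter_mem_eq_inter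
      have hcnot : (e.filter (fun i => ¬ i ∈ T)).card = k - t := by
        have h3 := Finset.card_filter_add_card_filter_not (s := e) (p := (· ∈ T))
        rw [hfT] at h3
        rw [hcardt, huniform e he] at h3
        omega
      have hp1 : ∏ i ∈ e.filter (· ∈ T), x i = (-(c*u))^t := by
        rw [Finset.prod_congr rfl (fun i hi => ?_), Finset.prod_const, hfT, hcardt]
        simp only [hxdef, if_pos (Finset.mem_filter.mp hi).2]
      have hp2 : ∏ i ∈ e.filter (fun i => ¬ i ∈ T), x i = c^(k-t) := by
        rw [Finset.prod_congr rfl (fun i hi => ?_), Finset.prod_const, hcnot]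
        simp only [hxdef, if_neg (Finset.mem_filter.mp hi).2]
      rw [hp1, hp2, ht.neg_pow]
      have hkk : t + (k - t) = k := by omega
      calc -(c*u)^t * c^(k-t) = -(u^t * (c^t * c^(k-t))) := by ring
        _ = -(u^t * c^(t+(k-t))) := by rw [pow_add]
        _ = -(c^k * u^t) := by rw [hkk]; ring
    · rw [if_neg hne]
      have : ∀ i ∈ e, x i = c := by
        intro i hi
        have : i ∉ T := fun hiT => hne ⟨i, Finset.mem_inter.mpr ⟨hi, hiT⟩⟩
        simp [hxdef, this]
      rw [Finset.prod_congr rfl this, Finset.prod_const, huniform e he]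
  have hval : (∑ e ∈ E, ∏ i ∈ e, x i)
      = (B:ℝ) * (-(c^k*u^t)) + ((m - B : ℕ):ℝ) * c^k := by
    rw [Finset.sum_congr rfl hprod, Finset.sum_ite, Finset.sum_const, Finset.sum_const]
    have h4 : (E.filter fun e => ¬(e ∩ T).Nonempty).card = m - B := by
      have := Finset.card_filter_add_card_filter_not (s := E)
        (p := fun e => (e ∩ T).Nonempty)
      omega
    rw [h4, nsmul_eq_mul, nsmul_eq_mul, ← hBdef]
  have happ := hlb _ ⟨x, hxnorm, rfl⟩
  rw [hval] at happ
  -- degree bound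
  have hdb : δ * σ ≤ t * B := by
    have h1 : ∑ i ∈ T, δ ≤ ∑ i ∈ T, (E.filter fun e => i ∈ e).card :=
      Finset.sum_le_sum fun i _ => hδlb i
    rw [dc, tsum_inter E t T hT, Finset.sum_const, smul_eq_mul] at h1
    calc δ * σ = σ * δ := by ring
      _ ≤ t * B := h1
  have hdbR : (δ:ℝ) * σ ≤ (t:ℝ) * B := by exact_mod_cast hdb
  -- main chain
  have h3 : -μ * W ≤ (k:ℝ) * (-(B:ℝ)*u^t + ((m:ℝ) - B)) := by
    have h4 := mul_le_mul_of_nonneg_right happ hW0.le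
    calc -μ * W ≤ ((k:ℝ) * ((B:ℝ) * (-(c^k*u^t)) + ((m - B:ℕ):ℝ) * c^k)) * W := h4
      _ = (k:ℝ)*(-(B:ℝ)*u^t + ((m - B:ℕ):ℝ)) * (c^k * W) := by ring
      _ = (k:ℝ)*(-(B:ℝ)*u^t + ((m - B:ℕ):ℝ)) := by
          rw [hck, inv_mul_cancel₀ hW0.ne', mul_one]
      _ = (k:ℝ) * (-(B:ℝ)*u^t + ((m:ℝ) - B)) := by rw [Nat.cast_sub hBm]
  have h1ut : (0:ℝ) < 1 + u^t := by positivity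
  have hkR0 : (0:ℝ) ≤ (k:ℝ) := by positivity
  have htR0 : (0:ℝ) ≤ (t:ℝ) := by positivity
  have h5 : (t:ℝ)*(-μ)*W ≤ (k:ℝ)*((t:ℝ)*m - (δ:ℝ)*σ*(1+u^t)) := by
    have hint1 := mul_le_mul_of_nonneg_left h3 htR0
    have hint2 := mul_le_mul_of_nonneg_left
      (mul_le_mul_of_nonneg_right hdbR h1ut.le) hkR0
    linarith [hint1, hint2]
  rw [hWdef, hut, huk] at h5
  -- final algebra
  have hkey : (t:ℝ)*p*((k:ℝ)*m + (n:ℝ)*μ)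
      - (σ:ℝ) * (((k:ℝ) - t) * δ * D + ((k:ℝ)*δ + t*μ) * p)
      = p * ((k:ℝ)*((t:ℝ)*m - (δ:ℝ)*σ*(1 + D/p))
        - ((t:ℝ)*(-μ)*((σ:ℝ)*((δ:ℝ)*D/(μ*p)) + ((n:ℝ) - σ)))) := by
    field_simp
    ring
  have h6 := mul_nonneg hp0.le (sub_nonneg.mpr h5)
  linarith [hkey, h6]

theorem lam_le_neg_one {V : Type*} [Fintype V] [DecidableEq V]
    (k : ℕ) (hk : Even k) (hk0 : 0 < k)
    (E : Finset (Finset V)) (huniform : ∀ e ∈ E, e.card = k) (hm : 1 ≤ E.card)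
    (lam : ℝ)
    (hlam : IsLeast {y : ℝ | ∃ x : V → ℝ, ∑ i, x i ^ k = 1 ∧
      y = k * ∑ e ∈ E, ∏ i ∈ e, x i} lam) : lam ≤ -1 := by
  obtain ⟨e0, he0⟩ := Finset.card_pos.mp hm
  have hcard : e0.card = k := huniform e0 he0
  have hv0 : ∃ v0, v0 ∈ e0 := Finset.card_pos.mp (hcard ▸ hk0)
  obtain ⟨v0, hv0⟩ := hv0
  set c : ℝ := ((k : ℝ))⁻¹ ^ ((k : ℝ))⁻¹ with hc
  have hkR : (0:ℝ) < (k:ℝ) := by exact_mod_cast hk0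
  have hcpos : 0 < c := Real.rpow_pos_of_pos (by positivity) _
  have hck : c ^ k = (k : ℝ)⁻¹ := by
    rw [hc, ← Real.rpow_natCast (_ ^ _) k, ← Real.rpow_mul (by positivity),
      inv_mul_cancel₀ (by positivity), Real.rpow_one]
  set x : V → ℝ := fun i => if i = v0 then -c else if i ∈ e0 then c else 0 with hx
  have hnorm : ∑ i, x i ^ k = 1 := by
    have : ∀ i, x i ^ k = if i ∈ e0 then c ^ k else 0 := by
      intro i
      by_cases h1 : i = v0
      · subst h1; simp [hx, hv0, hk.neg_pow]
      · by_cases h2 : i ∈ e0 <;> simp [hx, h1, h2, hk0.ne']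
    rw [Finset.sum_congr rfl fun i _ => this i, Finset.sum_ite_mem,
      Finset.univ_inter, Finset.sum_const, hcard, hck, nsmul_eq_mul,
      mul_inv_cancel₀ hkR.ne']
  have hprod : ∀ e ∈ E, (∏ i ∈ e, x i) = if e = e0 then -(c ^ k) else 0 := by
    intro e he
    by_cases h : e = e0
    · subst h
      rw [if_pos rfl, ← Finset.mul_prod_erase e x hv0]
      have : ∀ i ∈ e.erase v0, x i = c := by
        intro i hi
        have h1 := Finset.ne_of_mem_erase hi
        have h2 := Finset.mem_of_mem_erase hi
        simp [hx, h1, h2]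
      rw [Finset.prod_congr rfl this, Finset.prod_const, Finset.card_erase_of_mem hv0,
        hcard]
      have : x v0 = -c := by simp [hx]
      rw [this, show -c * c ^ (k-1) = -(c * c ^ (k-1)) by ring, ← pow_succ',
        Nat.sub_add_cancel hk0]
    · rw [if_neg h]
      have hsub : ¬ e ⊆ e0 := by
        intro hsub
        exact h (Finset.eq_of_subset_of_card_le hsub (by rw [hcard, huniform e he]))
      obtain ⟨j, hj, hj'⟩ := Finset.not_subset.mp hsub
      refine Finset.prod_eq_zero hj ?_
      have : j ≠ v0 := fun hjv => hj' (hjv ▸ hv0)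
      simp [hx, this, hj']
  have hval : (k : ℝ) * ∑ e ∈ E, ∏ i ∈ e, x i = -1 := by
    rw [Finset.sum_congr rfl hprod, Finset.sum_ite_eq' E e0 (fun _ => -c ^ k), if_pos he0, hck]
    field_simp
  have := hlam.2 ⟨x, hnorm, hval.symm⟩
  linarith

/-- **Hoffman-type bound for even uniform hypergraphs** (Theorem 3.1, sufficiency of the
equality condition). If there exists a `t`-independent set `S` in which every vertex has
minimum degree `δ` and such that every vertex `i ∉ S` lies in exactly
`((−λ)^{k/(k−t)} + d_i(−λ)^{t/(k−t)}) / (δ^{t/(k−t)} + (−λ)^{t/(k−t)})` edges meeting `S`,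
then the `t`-independence number attains the Hoffman-type bound and `|S| = α_t(H)`. -/
theorem hoffman_bound_even_hypergraph_equality_of_condition
    {V : Type*} [Fintype V] [DecidableEq V]
    (k t : ℕ) (hk : Even k) (ht : Odd t) (ht0 : 0 < t) (htk : t < k)
    (E : Finset (Finset V)) (huniform : ∀ e ∈ E, e.card = k) (hm : 1 ≤ E.card)
    (δ : ℕ) (hδ : IsLeast (Set.range fun i : V => (E.filter fun e => i ∈ e).card) δ)
    (lam : ℝ)
    (hlam : IsLeast {y : ℝ | ∃ x : V → ℝ, ∑ i, x i ^ k = 1 ∧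
      y = k * ∑ e ∈ E, ∏ i ∈ e, x i} lam)
    (α : ℕ)
    (hα : IsGreatest {c : ℕ | ∃ S : Finset V,
      (∀ e ∈ E, (e ∩ S).card = 0 ∨ (e ∩ S).card = t) ∧ S.card = c} α)
    (S : Finset V)
    (hSindep : ∀ e ∈ E, (e ∩ S).card = 0 ∨ (e ∩ S).card = t)
    (hSdeg : ∀ i ∈ S, (E.filter fun e => i ∈ e).card = δ)
    (hout : ∀ i ∉ S,
      ((E.filter fun e => i ∈ e ∧ (e ∩ S).Nonempty).card : ℝ) =
        ((-lam) ^ ((k : ℝ) / (k - t)) +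
          ((E.filter fun e => i ∈ e).card : ℝ) * (-lam) ^ ((t : ℝ) / (k - t))) /
          ((δ : ℝ) ^ ((t : ℝ) / (k - t)) + (-lam) ^ ((t : ℝ) / (k - t)))) :
    (α : ℝ) = t * (k * E.card - Fintype.card V * lam) * (-lam) ^ ((t : ℝ) / (k - t)) /
      ((k - t) * (δ : ℝ) ^ ((k : ℝ) / (k - t)) +
        (k * δ - t * lam) * (-lam) ^ ((t : ℝ) / (k - t))) ∧
    S.card = α := by
  classical
  have hk0 : 0 < k := ht0.trans htk
  have htkR : (t:ℝ) < k := by exact_mod_cast htk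
  have hktR : (0:ℝ) < (k:ℝ) - t := by linarith
  have hlam1 : lam ≤ -1 := lam_le_neg_one k hk hk0 E huniform hm lam hlam
  obtain ⟨μ, rfl⟩ : ∃ μ : ℝ, lam = -μ := ⟨-lam, (neg_neg lam).symm⟩
  simp only [neg_neg] at hout ⊢
  have hμ1 : 1 ≤ μ := by linarith [hlam1]
  have hμ0 : (0:ℝ) < μ := by linarith
  set p : ℝ := μ ^ ((t:ℝ)/((k:ℝ)-t)) with hpdef
  have hp0 : 0 < p := Real.rpow_pos_of_pos hμ0 _
  have hμk : μ ^ ((k:ℝ)/((k:ℝ)-t)) = μ * p := rpow_split' hμ0 htkR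
  -- minimum degree is at least 1
  have hδ1 : 1 ≤ δ := by
    by_contra h
    have hδ0 : δ = 0 := by omega
    obtain ⟨e0, he0⟩ := Finset.card_pos.mp hm
    have hcard : e0.card = k := huniform e0 he0
    obtain ⟨v0, hv0⟩ := Finset.card_pos.mp (hcard ▸ hk0)
    by_cases hvS : v0 ∈ S
    · have h1 := hSdeg v0 hvS
      have h2 : 0 < (E.filter fun e => v0 ∈ e).card :=
        Finset.card_pos.mpr ⟨e0, Finset.mem_filter.mpr ⟨he0, hv0⟩⟩
      omega
    · have h1 := hout v0 hvS
      rw [hδ0] at h1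
      have hz : ((0:ℕ):ℝ) ^ ((t:ℝ)/((k:ℝ)-t)) = 0 := by
        rw [Nat.cast_zero,
          Real.zero_rpow (div_pos (by exact_mod_cast ht0) hktR).ne']
      rw [hz, zero_add, hμk] at h1
      have hle : ((E.filter fun e => v0 ∈ e ∧ (e ∩ S).Nonempty).card : ℝ)
          ≤ ((E.filter fun e => v0 ∈ e).card : ℝ) := by
        exact_mod_cast Finset.card_le_card
          (show (E.filter fun e => v0 ∈ e ∧ (e ∩ S).Nonempty) ⊆ (E.filter fun e => v0 ∈ e) from
            fun e he => Finset.mem_filter.mpr ⟨(Finset.mem_filter.mp he).1, (Finset.mem_filter.mp he).2.1⟩)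
      have h2 : (μ*p + ((E.filter fun e => v0 ∈ e).card : ℝ)*p)/p
          = μ + ((E.filter fun e => v0 ∈ e).card : ℝ) := by
        field_simp
      rw [h2] at h1
      linarith
  have hδR : (0:ℝ) < δ := by exact_mod_cast Nat.lt_of_lt_of_le Nat.zero_lt_one hδ1
  set D : ℝ := (δ:ℝ) ^ ((t:ℝ)/((k:ℝ)-t)) with hDdef
  have hD0 : 0 < D := Real.rpow_pos_of_pos hδR _
  have hδk : (δ:ℝ) ^ ((k:ℝ)/((k:ℝ)-t)) = δ * D := rpow_split' hδR htkR
  set n := Fintype.card V with hndef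
  set m := E.card with hmdef
  set s := S.card with hsdef
  set B := (E.filter fun e => (e ∩ S).Nonempty).card with hBdef
  have hsn : s ≤ n := Finset.card_le_univ S
  have htB : t * B = δ * s := by
    rw [← tsum_inter E t S hSindep, ← dc E S, Finset.sum_congr rfl hSdeg,
      Finset.sum_const, smul_eq_mul, mul_comm]
  have hdS : ∑ i ∈ S, (E.filter fun e => i ∈ e).card = δ * s := by
    rw [Finset.sum_congr rfl hSdeg, Finset.sum_const, smul_eq_mul, mul_comm]
  have hdegtot : ∑ i : V, (E.filter fun e => i ∈ e).card = k * m := by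
    rw [dc E Finset.univ]
    have h1 : ∀ e ∈ E, (e ∩ Finset.univ).card = k := fun e he => by
      rw [Finset.inter_univ]; exact huniform e he
    rw [Finset.sum_congr rfl h1, Finset.sum_const, smul_eq_mul, mul_comm]
  have houtdegR : ∑ i ∈ Sᶜ, ((E.filter fun e => i ∈ e).card : ℝ)
      = (k:ℝ)*m - (δ:ℝ)*s := by
    have h1 : (∑ i ∈ S, (E.filter fun e => i ∈ e).card)
        + ∑ i ∈ Sᶜ, (E.filter fun e => i ∈ e).card = k * m := by
      rw [Finset.sum_add_sum_compl]; exact hdegtot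
    rw [hdS] at h1
    have h2 := congrArg (Nat.cast : ℕ → ℝ) h1
    push_cast at h2
    linarith
  have hcomplN : ∑ i ∈ Sᶜ, (E.filter fun e => i ∈ e ∧ (e ∩ S).Nonempty).card
      = B * (k - t) := by
    rw [dc2 E S]
    have h1 : ∀ e ∈ E.filter (fun e => (e ∩ S).Nonempty), (e \ S).card = k - t := by
      intro e he
      rw [Finset.mem_filter] at he
      have h2 : (e ∩ S).card = t := by
        refine (hSindep e he.1).resolve_left fun h0 => ?_
        rw [Finset.card_eq_zero] at h0
        exact he.2.ne_empty h0
      have h3 := Finset.card_inter_add_card_sdiff e S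
      rw [h2, huniform e he.1] at h3
      omega
    rw [Finset.sum_congr rfl h1, Finset.sum_const, smul_eq_mul]
  have hI : ((k:ℝ)-t)*B*(D+p) = ((n:ℝ)-s)*(μ*p) + ((k:ℝ)*m - (δ:ℝ)*s)*p := by
    have hL : (∑ i ∈ Sᶜ, ((E.filter fun e => i ∈ e ∧ (e ∩ S).Nonempty).card : ℝ))
        = (B:ℝ)*((k:ℝ)-t) := by
      have := congrArg (Nat.cast : ℕ → ℝ) hcomplN
      push_cast [Nat.cast_sub htk.le] at this
      rw [this]
    have hR : (∑ i ∈ Sᶜ, ((E.filter fun e => i ∈ e ∧ (e ∩ S).Nonempty).card : ℝ))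
        = (((n:ℝ)-s)*(μ*p) + ((k:ℝ)*m - (δ:ℝ)*s)*p)/(D+p) := by
      rw [Finset.sum_congr rfl (fun i hi => hout i (Finset.mem_compl.mp hi)),
        ← Finset.sum_div]
      congr 1
      rw [Finset.sum_add_distrib, Finset.sum_const, ← Finset.sum_mul,
        Finset.card_compl, nsmul_eq_mul, houtdegR, ← hsdef, ← hndef,
        Nat.cast_sub hsn, hμk]
    rw [hL] at hR
    rw [eq_div_iff (ne_of_gt (by positivity : (0:ℝ) < D + p))] at hR
    linear_combination hR
  have htBR : (t:ℝ)*B = (δ:ℝ)*s := by exact_mod_cast htB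
  have hQ : (s:ℝ) * (((k:ℝ)-t)*δ*D + ((k:ℝ)*δ + t*μ)*p)
      = (t:ℝ)*p*((k:ℝ)*m + (n:ℝ)*μ) := by
    linear_combination (t:ℝ)*hI - ((k:ℝ)-t)*(D+p)*htBR
  have hQ0 : 0 < ((k:ℝ)-t)*δ*D + ((k:ℝ)*δ + t*μ)*p := by
    have h1 : 0 < ((k:ℝ)-t)*δ*D := mul_pos (mul_pos hktR hδR) hD0
    have h2 : 0 < ((k:ℝ)*δ + t*μ)*p := by
      have h3 : (0:ℝ) < (k:ℝ)*δ := mul_pos (by exact_mod_cast hk0) hδR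
      have h4 : (0:ℝ) ≤ (t:ℝ)*μ := by positivity
      exact mul_pos (by linarith) hp0
    linarith
  obtain ⟨T, hTindep, hTcard⟩ := hα.1
  have hub := indep_bound k t hk ht ht0 htk E huniform hm δ hδ1
      (fun i => hδ.2 ⟨i, rfl⟩) μ hμ1 (fun y hy => hlam.2 hy) T hTindep
  rw [hTcard] at hub
  have hαs : α ≤ s := by
    have h1 : (α:ℝ) ≤ s := by
      rw [← hQ] at hub
      exact le_of_mul_le_mul_right hub hQ0
    exact_mod_cast h1
  have hsα : s ≤ α := hα.2 ⟨S, hSindep, rfl⟩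
  have hse : s = α := le_antisymm hsα hαs
  constructor
  · rw [← hse, hδk]
    rw [eq_div_iff (by
      have h5 : ((k:ℝ)-t)*((δ:ℝ)*D) + ((k:ℝ)*δ - (t:ℝ)*(-μ))*p
          = ((k:ℝ)-t)*δ*D + ((k:ℝ)*δ + t*μ)*p := by ring
      rw [h5]
      exact hQ0.ne')]
    linear_combination hQ
  · exact hse
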